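/- Let (A, m) be a local ring, a ∈ m, and R = A[X₁,…,X_l]/(X₁⋯X_l − a). If α ∈ A is a regular element of A, then (the image of) α is a regular element of R. -/

import Mathlib

open MvPolynomial

-- the "all ones" exponent
noncomputable def onesE (l : ℕ) : Fin l →₀ ℕ := ∑ i, Finsupp.single i 1

lemma prod_X_eq (l : ℕ) (B : Type*) [CommRing B] :
    (∏ i, (X i : MvPolynomial (Fin l) B)) = monomial (onesE l) 1 := by
  rw [onesE, monomial_sum_one]
  simp [X]

lemma onesE_ne_zero (l : ℕ) (hl : 1 ≤ l) : onesE l ≠ 0 := by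
  have : onesE l ⟨0, hl⟩ = 1 := by
    simp [onesE, Finsupp.single_apply, Finsupp.finset_sum_apply]
  intro h
  rw [h] at this
  simp at this

/-- `∏ X i - C b` is a regular element in `B[X₁,…,X_l]`, any commutative ring `B`. -/
lemma f_regular (l : ℕ) (hl : 1 ≤ l) (B : Type*) [CommRing B] (b : B)
    (g : MvPolynomial (Fin l) B)
    (hg : ((∏ i, (X i : MvPolynomial (Fin l) B)) - C b) * g = 0) : g = 0 := by
  by_contra hne
  have hsupp : (g.support.image (toLex : (Fin l →₀ ℕ) → Lex (Fin l →₀ ℕ))).Nonempty := by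
    simp [Finset.image_nonempty, MvPolynomial.support_nonempty.mpr hne]
  obtain ⟨d, hd, hdD⟩ := Finset.mem_image.mp ((g.support.image toLex).max'_mem hsupp)
  have hmax : ∀ e ∈ g.support, toLex e ≤ toLex d := fun e he =>
    hdD ▸ Finset.le_max' _ _ (Finset.mem_image_of_mem _ he)
  have hlt : toLex d < toLex (onesE l + d) := by
    have h0 : (0 : Lex (Fin l →₀ ℕ)) < toLex (onesE l) := by
      refine lt_of_le_of_ne bot_le ?_
      intro h
      exact onesE_ne_zero l hl (by simpa using h.symm)
    calc toLex d = 0 + toLex d := by rw [zero_add]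
      _ < toLex (onesE l) + toLex d := by exact add_lt_add_left h0 _
      _ = toLex (onesE l + d) := rfl
  have hnot : coeff (onesE l + d) g = 0 := by
    by_contra h
    exact absurd (hmax _ (MvPolynomial.mem_support_iff.mpr h)) (not_le.mpr hlt)
  have : coeff (onesE l + d) (((∏ i, (X i : MvPolynomial (Fin l) B)) - C b) * g) = coeff d g := by
    rw [sub_mul, coeff_sub, prod_X_eq, coeff_monomial_mul, one_mul, coeff_C_mul, hnot,
      mul_zero, sub_zero]
  rw [hg, coeff_zero] at this
  exact (MvPolynomial.mem_support_iff.mp hd) this.symm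

/-- the swap lemma for regular sequences of length two -/
lemma swap_reg {R : Type*} [CommRing R] {x y : R}
    (hx : ∀ r, x * r = 0 → r = 0)
    (hmod : ∀ r, y * r ∈ Ideal.span {x} → r ∈ Ideal.span {x}) :
    ∀ r, x * r ∈ Ideal.span {y} → r ∈ Ideal.span {y} := by
  intro r hr
  rw [Ideal.mem_span_singleton] at hr ⊢
  obtain ⟨s, hs⟩ := hr
  have : y * s ∈ Ideal.span {x} := Ideal.mem_span_singleton.mpr ⟨r, hs.symm⟩
  obtain ⟨t, ht⟩ := Ideal.mem_span_singleton.mp (hmod s this)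
  refine ⟨t, ?_⟩
  have h0 : x * (r - y * t) = 0 := by rw [ht] at hs; linear_combination hs
  have := hx _ h0
  linear_combination this

theorem regular_element_stays_regular
    (A : Type*) [CommRing A] [IsLocalRing A] [IsNoetherianRing A]
    (l : ℕ) (hl : 1 ≤ l)
    (a : A) (ha : a ∈ IsLocalRing.maximalIdeal A)
    (α : A) (hα : IsRegular α) :
    IsRegular
      (Ideal.Quotient.mk
        (Ideal.span {(∏ i, (X i : MvPolynomial (Fin l) A)) - C a})
        (C α)) := by
  set f : MvPolynomial (Fin l) A := (∏ i, (X i : MvPolynomial (Fin l) A)) - C a with hf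
  -- key: C α * p ∈ (f) → p ∈ (f)
  have key : ∀ p : MvPolynomial (Fin l) A,
      C α * p ∈ Ideal.span {f} → p ∈ Ideal.span {f} := by
    apply swap_reg
    · -- C α regular
      intro r hr
      ext d
      have := congrArg (coeff d) hr
      rw [coeff_C_mul, coeff_zero] at this
      simpa using hα.left (show α * coeff d r = α * 0 by simpa using this)
    · -- f regular mod (C α)
      intro r hr
      have hspan : (Ideal.span {(C α : MvPolynomial (Fin l) A)}) =
          RingHom.ker (MvPolynomial.map (Ideal.Quotient.mk (Ideal.span {α}))) := by
        rw [MvPolynomial.ker_map, Ideal.mk_ker, Ideal.map_span]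
        simp
      rw [hspan] at hr ⊢
      rw [RingHom.mem_ker] at hr ⊢
      rw [map_mul, hf, map_sub, map_prod] at hr
      simp only [MvPolynomial.map_X, MvPolynomial.map_C] at hr
      exact f_regular l hl _ _ _ hr
  constructor
  · intro y z h
    obtain ⟨p, rfl⟩ := Ideal.Quotient.mk_surjective y
    obtain ⟨q, rfl⟩ := Ideal.Quotient.mk_surjective z
    simp only [← map_mul] at h
    rw [Ideal.Quotient.eq] at h ⊢
    have : C α * (p - q) ∈ Ideal.span {f} := by rw [mul_sub]; exact h
    exact key _ this
  · intro y z h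
    obtain ⟨p, rfl⟩ := Ideal.Quotient.mk_surjective y
    obtain ⟨q, rfl⟩ := Ideal.Quotient.mk_surjective z
    simp only [← map_mul] at h
    rw [Ideal.Quotient.eq] at h ⊢
    have : C α * (p - q) ∈ Ideal.span {f} := by
      rw [mul_sub, mul_comm (C α) p, mul_comm (C α) q]; exact h
    exact key _ this
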